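/- Correctness of the parallel binding edge-probability decomposition: let p ∈ [0,1], let q ∈ (0,1), and let R ≥ 1 be an integer. Define r = min((1 − (1 − p)^{1/R}) / q, 1) and p_rem = max(1 − (1 − p)/(1 − q)^R, 0). Then (1 − q·r)^R · (1 − p_rem) = 1 − p. Consequently, if an edge is independently inserted in each of R rounds with probability q·r, and additionally inserted with probability p_rem, then the overall probability that the edge is present equals p. -/

import Mathlib

/-- Correctness of the parallel binding edge-probability decomposition: let `p ∈ [0,1]`, let
`q ∈ (0,1)`, and let `R ≥ 1` be an integer. Define
`r = min((1 − (1 − p)^{1/R}) / q, 1)` (where `(1 − p)^{1/R}` is the real `R`-th root, i.e.,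
a real power with exponent `1/R`) and `p_rem = max(1 − (1 − p)/(1 − q)^R, 0)`. Then
`(1 − q·r)^R · (1 − p_rem) = 1 − p`; consequently, if an edge is independently inserted in
each of `R` rounds with probability `q·r` and additionally inserted with probability
`p_rem`, the overall probability that the edge is present equals `p`. -/
theorem parallel_binding_decomposition
    (p q : ℝ) (R : ℕ)
    (hp0 : 0 ≤ p) (hp1 : p ≤ 1)
    (hq0 : 0 < q) (hq1 : q < 1)
    (hR : 1 ≤ R) :
    (1 - q * min ((1 - (1 - p) ^ ((1 : ℝ) / R)) / q) 1) ^ R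
      * (1 - max (1 - (1 - p) / (1 - q) ^ R) 0) = 1 - p := by
  have hp' : (0:ℝ) ≤ 1 - p := by linarith
  have hq' : (0:ℝ) ≤ 1 - q := by linarith
  have hqR : (0:ℝ) < (1 - q) ^ R := pow_pos (by linarith) R
  have hRne : R ≠ 0 := by omega
  set x : ℝ := (1 - p) ^ ((1 : ℝ) / R) with hxdef
  have hx0 : 0 ≤ x := Real.rpow_nonneg hp' _
  have hxR : x ^ R = 1 - p := by
    rw [hxdef, one_div]
    exact Real.rpow_inv_natCast_pow hp' hRne
  by_cases h : (1 - x) / q ≤ 1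
  · rw [min_eq_left h]
    have hsub : 1 - q * ((1 - x) / q) = x := by field_simp; ring
    rw [hsub]
    have h1 : 1 - q ≤ x := by
      have := (div_le_one hq0).mp h
      linarith
    have h2 : (1 - q) ^ R ≤ 1 - p := by
      rw [← hxR]; exact pow_le_pow_left₀ hq' h1 R
    have h3 : max (1 - (1 - p) / (1 - q) ^ R) 0 = 0 := by
      apply max_eq_right
      have : (1:ℝ) ≤ (1 - p) / (1 - q) ^ R := (one_le_div hqR).mpr h2
      linarith
    rw [h3, hxR]; ring
  · push_neg at h
    have hmin : (1:ℝ) ≤ (1 - x) / q := le_of_lt ((one_lt_div hq0).mpr (by nlinarith [(lt_div_iff₀ hq0).mp h]))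
    rw [min_eq_right hmin]
    have h1 : x ≤ 1 - q := by
      have := (lt_div_iff₀ hq0).mp h
      linarith
    have h2 : 1 - p ≤ (1 - q) ^ R := by
      rw [← hxR]; exact pow_le_pow_left₀ hx0 h1 R
    have h3 : max (1 - (1 - p) / (1 - q) ^ R) 0 = 1 - (1 - p) / (1 - q) ^ R := by
      apply max_eq_left
      have : (1 - p) / (1 - q) ^ R ≤ 1 := (div_le_one hqR).mpr h2
      linarith
    rw [h3]
    have : (1 - q * 1) = 1 - q := by ring
    rw [this]
    field_simp
    ring
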